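/- If G is a finite simple connected graph with n(G) ≥ ω(G)+1 ≥ 4, then dim_{A,l}(G) ≤ ⌊((ω(G)−2)/(ω(G)−1))·n(G)⌋, where ω(G) is the clique number. -/

import Mathlib

open SimpleGraph

variable {V : Type*} [Fintype V] [DecidableEq V]

/-- `S` is a local resolving set of `G`. -/
def IsLocalResolving (G : SimpleGraph V) (S : Finset V) : Prop :=
  ∀ u v : V, G.Adj u v → u ∉ S → v ∉ S → ∃ w ∈ S, G.dist u w ≠ G.dist v w

/-- The local metric dimension of `G`. -/
noncomputable def dimL (G : SimpleGraph V) : ℕ :=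
  sInf {k | ∃ S : Finset V, S.card = k ∧ IsLocalResolving G S}

/-- `S` is a local adjacency resolving set of `G`. -/
def IsLocalAdjResolving (G : SimpleGraph V) (S : Finset V) : Prop :=
  ∀ u v : V, G.Adj u v → u ∉ S → v ∉ S → ∃ w ∈ S, Xor' (G.Adj w u) (G.Adj w v)

/-- The local adjacency metric dimension of `G`. -/
noncomputable def dimAL (G : SimpleGraph V) : ℕ :=
  sInf {k | ∃ S : Finset V, S.card = k ∧ IsLocalAdjResolving G S}

/-- `S` is a resolving set of `G`. -/
def IsResolving (G : SimpleGraph V) (S : Finset V) : Prop :=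
  ∀ u v : V, u ≠ v → u ∉ S → v ∉ S → ∃ w ∈ S, G.dist u w ≠ G.dist v w

/-- The metric dimension of `G`. -/
noncomputable def dimM (G : SimpleGraph V) : ℕ :=
  sInf {k | ∃ S : Finset V, S.card = k ∧ IsResolving G S}

/-- `S` is an adjacency resolving set of `G`. -/
def IsAdjResolving (G : SimpleGraph V) (S : Finset V) : Prop :=
  ∀ u v : V, u ≠ v → u ∉ S → v ∉ S → ∃ w ∈ S, Xor' (G.Adj w u) (G.Adj w v)

/-- The adjacency metric dimension of `G`. -/
noncomputable def dimA (G : SimpleGraph V) : ℕ :=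
  sInf {k | ∃ S : Finset V, S.card = k ∧ IsAdjResolving G S}

section Hidden
open Finset

set_option linter.unusedSectionVars false
set_option linter.unusedVariables false

namespace DimALWork

set_option linter.unusedSectionVars false
set_option linter.unusedVariables false

variable {V : Type*} [Fintype V] [DecidableEq V] (G : SimpleGraph V) (ω : ℕ)

open scoped Classical in
/-- the set of external attachment vertices of `C` within `A` -/
noncomputable def ext (A C : Finset V) : Finset V :=
  (A \ C).filter (fun x => ∃ c ∈ C, G.Adj x c)

/-- `C` has no edges to the rest of `A` -/
def IsoIn (A C : Finset V) : Prop := ∀ c ∈ C, ∀ x ∈ A, x ∉ C → ¬ G.Adj c x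

/-- every isolated ω-clique inside `A` has a mixed witness in `Y` -/
def Inv (A Y : Finset V) : Prop :=
  ∀ C : Finset V, C ⊆ A → G.IsNClique ω C → IsoIn G A C →
    ∃ y ∈ Y, (∃ c ∈ C, G.Adj y c) ∧ (∃ c ∈ C, ¬ G.Adj y c)

def GoodOn (A Y T : Finset V) : Prop :=
  ∀ u ∈ T, ∀ v ∈ T, G.Adj u v → ∃ w ∈ (A \ T) ∪ Y, Xor' (G.Adj w u) (G.Adj w v)

variable {G ω}

lemma mem_ext {A C : Finset V} {x : V} :
    x ∈ ext G A C ↔ (x ∈ A ∧ x ∉ C) ∧ ∃ c ∈ C, G.Adj x c := by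
  classical
  simp [ext, Finset.mem_filter, Finset.mem_sdiff]

lemma isoIn_iff_ext_empty {A C : Finset V} (hCA : C ⊆ A) :
    IsoIn G A C ↔ ext G A C = ∅ := by
  constructor
  · intro h
    ext x
    simp only [mem_ext, Finset.notMem_empty, iff_false]
    rintro ⟨⟨hxA, hxC⟩, c, hc, hadj⟩
    exact h c hc x hxA hxC hadj.symm
  · intro h c hc x hxA hxC hadj
    have : x ∈ ext G A C := mem_ext.2 ⟨⟨hxA, hxC⟩, c, hc, hadj.symm⟩
    simp [h] at this

lemma not_all_adj (hfree : ∀ s : Finset V, G.IsClique (s : Set V) → s.card ≤ ω)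
    {C : Finset V} (hC : G.IsNClique ω C) {x : V} (hx : x ∉ C) :
    ∃ c ∈ C, ¬ G.Adj x c := by
  by_contra h
  push_neg at h
  have h2 : G.IsNClique (ω + 1) (insert x C) := hC.insert h
  have := hfree _ h2.isClique
  rw [h2.card_eq] at this
  omega

/-- The key step lemma: given one valid chunk `(X, R)`, reduce the claim to `A \ X`. -/
lemma step (hfree : ∀ s : Finset V, G.IsClique (s : Set V) → s.card ≤ ω)
    {A Y X R : Finset V} (hXA : X ⊆ A) (hXne : X.Nonempty) (hRX : R ⊆ X)
    (hInv : Inv G ω A Y)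
    (c1 : X.card ≤ (ω - 1) * R.card)
    (c2 : ∀ u ∈ R, ∀ v ∈ R, G.Adj u v →
      ∃ w ∈ (X \ R) ∪ Y, Xor' (G.Adj w u) (G.Adj w v))
    (c3 : ∀ t ∈ R, ∀ x ∈ A \ X, G.Adj t x →
      ∃ w ∈ (X \ R) ∪ Y, Xor' (G.Adj w t) (G.Adj w x))
    (c4 : ∀ C : Finset V, C ⊆ A \ X → G.IsNClique ω C → IsoIn G (A \ X) C →
      IsoIn G A C ∨ ∃ w ∈ X \ R, ∃ c ∈ C, G.Adj w c)
    (IH : ∀ m, m < A.card → ∀ A' Y' : Finset V, A'.card = m → Inv G ω A' Y' →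
      ∃ T' : Finset V, T' ⊆ A' ∧ A'.card ≤ (ω - 1) * T'.card ∧ GoodOn G A' Y' T') :
    ∃ T : Finset V, T ⊆ A ∧ A.card ≤ (ω - 1) * T.card ∧ GoodOn G A Y T := by
  classical
  set A' := A \ X with hA'
  set Y' := Y ∪ (X \ R) with hY'
  -- invariant for (A', Y')
  have hInv' : Inv G ω A' Y' := by
    intro C hCA' hCclq hCiso
    rcases c4 C hCA' hCclq hCiso with hiso | ⟨w, hwXR, c, hc, hadj⟩
    · obtain ⟨y, hy, hmix⟩ := hInv C (hCA'.trans (Finset.sdiff_subset)) hCclq hiso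
      exact ⟨y, Finset.mem_union_left _ hy, hmix⟩
    · refine ⟨w, Finset.mem_union_right _ hwXR, ⟨c, hc, hadj⟩, ?_⟩
      have hwC : w ∉ C := by
        intro hwc
        have := hCA' hwc
        rw [Finset.mem_sdiff] at this
        exact this.2 ((Finset.sdiff_subset) hwXR)
      exact not_all_adj hfree hCclq hwC
  -- cardinality decrease
  have hcard' : A'.card < A.card := by
    apply Finset.card_lt_card
    rw [Finset.ssubset_iff_of_subset (Finset.sdiff_subset)]
    obtain ⟨x, hx⟩ := hXne
    exact ⟨x, hXA hx, by simp [hx]⟩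
  obtain ⟨T', hT'A', hT'card, hT'good⟩ := IH A'.card hcard' A' Y' rfl hInv'
  refine ⟨R ∪ T', ?_, ?_, ?_⟩
  · intro t ht
    rcases Finset.mem_union.1 ht with h | h
    · exact hXA (hRX h)
    · exact (Finset.sdiff_subset) (hT'A' h)
  · have hdisj : Disjoint R T' := by
      refine Finset.disjoint_left.2 fun a haR haT' => ?_
      have := hT'A' haT'
      rw [Finset.mem_sdiff] at this
      exact this.2 (hRX haR)
    have hAcard : A'.card + X.card = A.card := Finset.card_sdiff_add_card_eq_card hXA
    have hTcard : (R ∪ T').card = R.card + T'.card := by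
      rw [Finset.card_union_of_disjoint hdisj]
    rw [hTcard, Nat.mul_add]
    omega
  · -- GoodOn
    intro u hu v hv hadj
    have transfer : ∀ w, w ∈ (X \ R) ∪ Y → w ∈ (A \ (R ∪ T')) ∪ Y := by
      intro w hw
      rcases Finset.mem_union.1 hw with hw | hw
      · rw [Finset.mem_sdiff] at hw
        refine Finset.mem_union_left _ ?_
        rw [Finset.mem_sdiff]
        refine ⟨hXA hw.1, ?_⟩
        rw [Finset.mem_union]
        rintro (h | h)
        · exact hw.2 h
        · have := hT'A' h
          rw [Finset.mem_sdiff] at this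
          exact this.2 hw.1
      · exact Finset.mem_union_right _ hw
    rcases Finset.mem_union.1 hu with hu' | hu' <;> rcases Finset.mem_union.1 hv with hv' | hv'
    · obtain ⟨w, hw, hx⟩ := c2 u hu' v hv' hadj
      exact ⟨w, transfer w hw, hx⟩
    · have hvA' : v ∈ A \ X := hT'A' hv'
      obtain ⟨w, hw, hx⟩ := c3 u hu' v hvA' hadj
      exact ⟨w, transfer w hw, hx⟩
    · have huA' : u ∈ A \ X := hT'A' hu'
      obtain ⟨w, hw, hx⟩ := c3 v hv' u huA' hadj.symm
      refine ⟨w, transfer w hw, ?_⟩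
      exact Eq.mp (xor_comm _ _) hx
    · obtain ⟨w, hw, hx⟩ := hT'good u hu' v hv' hadj
      refine ⟨w, ?_, hx⟩
      rcases Finset.mem_union.1 hw with hw | hw
      · rw [Finset.mem_sdiff, Finset.mem_sdiff] at hw
        refine Finset.mem_union_left _ ?_
        rw [Finset.mem_sdiff]
        refine ⟨hw.1.1, ?_⟩
        rw [Finset.mem_union]
        rintro (h | h)
        · exact hw.1.2 (hRX h)
        · exact hw.2 h
      · rcases Finset.mem_union.1 hw with hw | hw
        · exact Finset.mem_union_right _ hw
        · exact transfer w (Finset.mem_union_left _ hw)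



lemma exists_maximal_clique {A : Finset V} (hA : A.Nonempty) :
    ∃ W : Finset V, W ⊆ A ∧ W.Nonempty ∧ G.IsClique (W : Set V) ∧
      ∀ x ∈ A, x ∉ W → ∃ w ∈ W, ¬ G.Adj x w := by
  classical
  obtain ⟨a, ha⟩ := hA
  set 𝒯 := A.powerset.filter (fun s : Finset V => G.IsClique (s : Set V) ∧ s.Nonempty) with h𝒯
  have hne : 𝒯.Nonempty := by
    refine ⟨{a}, ?_⟩
    rw [h𝒯, Finset.mem_filter, Finset.mem_powerset]
    refine ⟨Finset.singleton_subset_iff.2 ha, ?_, Finset.singleton_nonempty a⟩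
    rw [Finset.coe_singleton]
    exact Set.pairwise_singleton a G.Adj
  obtain ⟨W, hW𝒯, hWmax⟩ := 𝒯.exists_max_image Finset.card hne
  rw [h𝒯, Finset.mem_filter, Finset.mem_powerset] at hW𝒯
  obtain ⟨hWA, hWclq, hWne⟩ := hW𝒯
  refine ⟨W, hWA, hWne, hWclq, ?_⟩
  intro x hxA hxW
  by_contra h
  push_neg at h
  have hclq : G.IsClique ((insert x W : Finset V) : Set V) := by
    rw [Finset.coe_insert]
    exact hWclq.insert (fun b hb _ => (h b hb))
  have hmem : insert x W ∈ 𝒯 := by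
    rw [h𝒯, Finset.mem_filter, Finset.mem_powerset]
    exact ⟨Finset.insert_subset hxA hWA, hclq, Finset.insert_nonempty _ _⟩
  have := hWmax _ hmem
  rw [Finset.card_insert_of_notMem hxW] at this
  omega


lemma pin_attach {A X C'' : Finset V} (hC'' : C'' ⊆ A \ X)
    (hiso : IsoIn G (A \ X) C'') : ext G A C'' ⊆ X := by
  intro x hx
  obtain ⟨⟨hxA, hxC⟩, c, hc, hadj⟩ := mem_ext.1 hx
  by_contra hxX
  exact hiso c hc x (Finset.mem_sdiff.2 ⟨hxA, hxX⟩) hxC hadj.symm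

/-- In case 2 (no isolated ω-cliques, `C` of minimal attachment), condition c4
holds for any chunk with at most 2 representatives, provided `3 ≤ e`. -/
lemma c4_of_small_R {A C X R : Finset V}
    (hmin : ∀ C' : Finset V, C' ⊆ A → G.IsNClique ω C' → (ext G A C).card ≤ (ext G A C').card)
    (hR2 : R.card ≤ 2) (hE3 : 3 ≤ (ext G A C).card) :
    ∀ C'' : Finset V, C'' ⊆ A \ X → G.IsNClique ω C'' → IsoIn G (A \ X) C'' →
      IsoIn G A C'' ∨ ∃ w ∈ X \ R, ∃ c ∈ C'', G.Adj w c := by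
  intro C'' hC''AX hC''clq hC''iso
  have hsub : ext G A C'' ⊆ X := pin_attach hC''AX hC''iso
  by_cases hw : ∃ w ∈ X \ R, ∃ c ∈ C'', G.Adj w c
  · exact Or.inr hw
  · exfalso
    have hsubR : ext G A C'' ⊆ R := by
      intro x hx
      have hxX := hsub hx
      by_contra hxR
      obtain ⟨⟨hxA, hxC⟩, c, hc, hadj⟩ := mem_ext.1 hx
      exact hw ⟨x, Finset.mem_sdiff.2 ⟨hxX, hxR⟩, c, hc, hadj⟩
    have h1 := hmin C'' (hC''AX.trans Finset.sdiff_subset) hC''clq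
    have h2 := Finset.card_le_card hsubR
    omega

lemma clique_erase {C : Finset V} (hC : G.IsNClique ω C) {t : V} (ht : t ∈ C) :
    G.IsNClique (ω - 1) (C.erase t) :=
  ⟨hC.isClique.subset (Finset.coe_subset.2 (Finset.erase_subset _ _)),
    by rw [Finset.card_erase_of_mem ht, hC.card_eq]⟩

lemma case2_big (hω : 3 ≤ ω) (hfree : ∀ s : Finset V, G.IsClique (s : Set V) → s.card ≤ ω)
    {A Y C : Finset V} (hCA : C ⊆ A) (hCclq : G.IsNClique ω C)
    (hmin : ∀ C' : Finset V, C' ⊆ A → G.IsNClique ω C' → (ext G A C).card ≤ (ext G A C').card)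
    (hE3 : 3 ≤ (ext G A C).card)
    (hInv : Inv G ω A Y)
    (IH : ∀ m, m < A.card → ∀ A' Y' : Finset V, A'.card = m → Inv G ω A' Y' →
      ∃ T' : Finset V, T' ⊆ A' ∧ A'.card ≤ (ω - 1) * T'.card ∧ GoodOn G A' Y' T') :
    ∃ T : Finset V, T ⊆ A ∧ A.card ≤ (ω - 1) * T.card ∧ GoodOn G A Y T := by
  classical
  by_cases hsp : ∃ t'' ∈ C, ∃ x0 ∈ A, x0 ∉ C ∧ (∀ c ∈ C, c ≠ t'' → G.Adj x0 c) ∧ ¬ G.Adj x0 t''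
  · -- δ-chunk
    obtain ⟨t'', ht''C, x0, hx0A, hx0C, hx0all, hx0t⟩ := hsp
    have ht''x0 : t'' ≠ x0 := fun h => hx0C (h ▸ ht''C)
    have hXA : insert x0 C ⊆ A := Finset.insert_subset hx0A hCA
    have hRX : ({t'', x0} : Finset V) ⊆ insert x0 C := by
      intro a ha
      simp only [Finset.mem_insert, Finset.mem_singleton] at ha
      rcases ha with rfl | rfl
      · exact Finset.mem_insert_of_mem ht''C
      · exact Finset.mem_insert_self _ _
    refine step hfree hXA ⟨x0, Finset.mem_insert_self _ _⟩ hRX hInv ?_ ?_ ?_ ?_ IH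
    · rw [Finset.card_insert_of_notMem hx0C, hCclq.card_eq,
        Finset.card_pair ht''x0]
      omega
    · intro u hu v hv hadj
      simp only [Finset.mem_insert, Finset.mem_singleton] at hu hv
      rcases hu with rfl | rfl <;> rcases hv with rfl | rfl
      · exact absurd rfl hadj.ne
      · exact absurd hadj.symm hx0t
      · exact absurd hadj hx0t
      · exact absurd rfl hadj.ne
    · intro s hs x hx hadj
      rw [Finset.mem_sdiff] at hx
      have hxC : x ∉ C := fun h => hx.2 (Finset.mem_insert_of_mem h)
      have hxx0 : x ≠ x0 := fun h => hx.2 (h ▸ Finset.mem_insert_self _ _)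
      simp only [Finset.mem_insert, Finset.mem_singleton] at hs
      rcases hs with hseq | hseq <;> subst hseq
      · -- s = t''
        obtain ⟨c, hcC, hnadj⟩ := not_all_adj hfree hCclq hxC
        have hct : c ≠ s := by
          rintro rfl
          exact hnadj hadj.symm
        refine ⟨c, Finset.mem_union_left _ ?_, Or.inl ⟨?_, fun h => hnadj h.symm⟩⟩
        · rw [Finset.mem_sdiff]
          refine ⟨Finset.mem_insert_of_mem hcC, ?_⟩
          simp only [Finset.mem_insert, Finset.mem_singleton]
          rintro (rfl | rfl)
          · exact hct rfl
          · exact hx0C hcC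
        · exact hCclq.isClique hcC ht''C hct
      · -- s = x0
        have hW'' : G.IsNClique ω (insert s (C.erase t'')) := by
          have h1 := clique_erase hCclq ht''C
          have h2 := h1.insert (fun b hb => by
            rw [Finset.mem_erase] at hb
            exact hx0all b hb.2 hb.1)
          have h3 : ω - 1 + 1 = ω := by omega
          rwa [h3] at h2
        have hxW'' : x ∉ insert s (C.erase t'') := by
          simp only [Finset.mem_insert, Finset.mem_erase]
          rintro (rfl | ⟨-, h⟩)
          · exact hxx0 rfl
          · exact hxC h
        obtain ⟨c, hcW'', hnadj⟩ := not_all_adj hfree hW'' hxW''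
        have hcx0 : c ≠ s := by
          rintro rfl
          exact hnadj hadj.symm
        rw [Finset.mem_insert] at hcW''
        rcases hcW'' with rfl | hcW''
        · exact absurd rfl hcx0
        rw [Finset.mem_erase] at hcW''
        refine ⟨c, Finset.mem_union_left _ ?_, Or.inl ⟨?_, fun h => hnadj h.symm⟩⟩
        · rw [Finset.mem_sdiff]
          refine ⟨Finset.mem_insert_of_mem hcW''.2, ?_⟩
          simp only [Finset.mem_insert, Finset.mem_singleton]
          rintro (rfl | rfl)
          · exact hcW''.1 rfl
          · exact hx0C hcW''.2
        · exact (hx0all c hcW''.2 hcW''.1).symm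
    · exact c4_of_small_R hmin (le_trans (Finset.card_insert_le _ _) (by simp)) hE3
  · -- ε-chunk
    have hEne : (ext G A C).Nonempty := Finset.card_pos.1 (by omega)
    obtain ⟨u, hu⟩ := hEne
    obtain ⟨⟨huA, huC⟩, t, htC, hut⟩ := mem_ext.1 hu
    obtain ⟨t', ht'C, hut'⟩ := not_all_adj hfree hCclq huC
    have htt' : t ≠ t' := by
      rintro rfl
      exact hut' hut
    have hXA : insert u C ⊆ A := Finset.insert_subset huA hCA
    have hRX : ({t, t'} : Finset V) ⊆ insert u C := by
      intro a ha
      simp only [Finset.mem_insert, Finset.mem_singleton] at ha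
      rcases ha with rfl | rfl
      · exact Finset.mem_insert_of_mem htC
      · exact Finset.mem_insert_of_mem ht'C
    have huR : u ∉ ({t, t'} : Finset V) := by
      simp only [Finset.mem_insert, Finset.mem_singleton]
      rintro (rfl | rfl)
      · exact huC htC
      · exact huC ht'C
    refine step hfree hXA ⟨u, Finset.mem_insert_self _ _⟩ hRX hInv ?_ ?_ ?_ ?_ IH
    · rw [Finset.card_insert_of_notMem huC, hCclq.card_eq, Finset.card_pair htt']
      omega
    · intro a ha b hb hadj
      refine ⟨u, Finset.mem_union_left _ (Finset.mem_sdiff.2 ⟨Finset.mem_insert_self _ _, huR⟩), ?_⟩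
      simp only [Finset.mem_insert, Finset.mem_singleton] at ha hb
      rcases ha with rfl | rfl <;> rcases hb with rfl | rfl
      · exact absurd rfl hadj.ne
      · exact Or.inl ⟨hut, hut'⟩
      · exact Or.inr ⟨hut, hut'⟩
      · exact absurd rfl hadj.ne
    · intro s hs x hx hadj
      rw [Finset.mem_sdiff] at hx
      have hxC : x ∉ C := fun h => hx.2 (Finset.mem_insert_of_mem h)
      have hxu : x ≠ u := fun h => hx.2 (h ▸ Finset.mem_insert_self _ _)
      have hxA : x ∈ A := hx.1
      -- claim: some w ∈ C, w ≠ t, w ≠ t', ¬ Adj w x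
      have claim : ∃ w ∈ C, w ≠ t ∧ w ≠ t' ∧ ¬ G.Adj w x := by
        by_contra hcon
        push_neg at hcon
        simp only [Finset.mem_insert, Finset.mem_singleton] at hs
        have hall : ∀ c ∈ C, c ≠ t → c ≠ t' → G.Adj x c :=
          fun c hc h1 h2 => (hcon c hc h1 h2).symm
        rcases hs with hseq | hseq <;> subst hseq
        · -- s = t ; is x adjacent to t' ?
          by_cases hxt' : G.Adj x t'
          · obtain ⟨c, hcC, hnadj⟩ := not_all_adj hfree hCclq hxC
            rcases eq_or_ne c s with rfl | h1
            · exact hnadj hadj.symm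
            rcases eq_or_ne c t' with rfl | h2
            · exact hnadj hxt'
            exact hnadj (hall c hcC h1 h2)
          · refine hsp ⟨t', ht'C, x, hxA, hxC, ?_, hxt'⟩
            intro c hc hct'
            rcases eq_or_ne c s with rfl | h1
            · exact hadj.symm
            exact hall c hc h1 hct'
        · -- s = t'
          by_cases hxt : G.Adj x t
          · obtain ⟨c, hcC, hnadj⟩ := not_all_adj hfree hCclq hxC
            rcases eq_or_ne c t with rfl | h1
            · exact hnadj hxt
            rcases eq_or_ne c s with rfl | h2
            · exact hnadj hadj.symm
            exact hnadj (hall c hcC h1 h2)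
          · refine hsp ⟨t, htC, x, hxA, hxC, ?_, hxt⟩
            intro c hc hct
            rcases eq_or_ne c s with rfl | h2
            · exact hadj.symm
            exact hall c hc hct h2
      obtain ⟨w, hwC, hwt, hwt', hnadj⟩ := claim
      have hws : w ≠ s := by
        simp only [Finset.mem_insert, Finset.mem_singleton] at hs
        rcases hs with hseq | hseq <;> subst hseq
        · exact hwt
        · exact hwt'
      refine ⟨w, Finset.mem_union_left _ ?_, Or.inl ⟨?_, hnadj⟩⟩
      · rw [Finset.mem_sdiff]
        refine ⟨Finset.mem_insert_of_mem hwC, ?_⟩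
        simp only [Finset.mem_insert, Finset.mem_singleton]
        rintro (rfl | rfl)
        · exact hwt rfl
        · exact hwt' rfl
      · have hsC : s ∈ C := by
          simp only [Finset.mem_insert, Finset.mem_singleton] at hs
          rcases hs with rfl | rfl
          · exact htC
          · exact ht'C
        exact hCclq.isClique hwC hsC hws
    · exact c4_of_small_R hmin (le_trans (Finset.card_insert_le _ _) (by simp)) hE3


lemma case2_one (hω : 3 ≤ ω) (hfree : ∀ s : Finset V, G.IsClique (s : Set V) → s.card ≤ ω)
    {A Y C : Finset V} (hCA : C ⊆ A) (hCclq : G.IsNClique ω C)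
    (hnoiso : ∀ C' : Finset V, C' ⊆ A → G.IsNClique ω C' → ¬ IsoIn G A C')
    (hE1 : (ext G A C).card = 1)
    (hInv : Inv G ω A Y)
    (IH : ∀ m, m < A.card → ∀ A' Y' : Finset V, A'.card = m → Inv G ω A' Y' →
      ∃ T' : Finset V, T' ⊆ A' ∧ A'.card ≤ (ω - 1) * T'.card ∧ GoodOn G A' Y' T') :
    ∃ T : Finset V, T ⊆ A ∧ A.card ≤ (ω - 1) * T.card ∧ GoodOn G A Y T := by
  classical
  obtain ⟨y, hy⟩ := Finset.card_eq_one.1 hE1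
  have hyext : y ∈ ext G A C := by rw [hy]; exact Finset.mem_singleton_self y
  obtain ⟨⟨hyA, hyC⟩, d1, hd1, hyadj⟩ := mem_ext.1 hyext
  obtain ⟨d2, hd2, hynadj⟩ := not_all_adj hfree hCclq hyC
  have hd12 : d1 ≠ d2 := by rintro rfl; exact hynadj hyadj
  have hXA : insert y C ⊆ A := Finset.insert_subset hyA hCA
  have hRX : ({d1, d2} : Finset V) ⊆ insert y C := by
    intro a ha
    simp only [Finset.mem_insert, Finset.mem_singleton] at ha
    rcases ha with rfl | rfl
    · exact Finset.mem_insert_of_mem hd1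
    · exact Finset.mem_insert_of_mem hd2
  have hyR : y ∉ ({d1, d2} : Finset V) := by
    simp only [Finset.mem_insert, Finset.mem_singleton]
    rintro (rfl | rfl)
    · exact hyC hd1
    · exact hyC hd2
  refine step hfree hXA ⟨y, Finset.mem_insert_self _ _⟩ hRX hInv ?_ ?_ ?_ ?_ IH
  · rw [Finset.card_insert_of_notMem hyC, hCclq.card_eq, Finset.card_pair hd12]
    omega
  · intro u hu v hv hadj
    refine ⟨y, Finset.mem_union_left _
      (Finset.mem_sdiff.2 ⟨Finset.mem_insert_self _ _, hyR⟩), ?_⟩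
    simp only [Finset.mem_insert, Finset.mem_singleton] at hu hv
    rcases hu with rfl | rfl <;> rcases hv with rfl | rfl
    · exact absurd rfl hadj.ne
    · exact Or.inl ⟨hyadj, hynadj⟩
    · exact Or.inr ⟨hyadj, hynadj⟩
    · exact absurd rfl hadj.ne
  · intro s hs x hx hadj
    rw [Finset.mem_sdiff] at hx
    have hxC : x ∉ C := fun h => hx.2 (Finset.mem_insert_of_mem h)
    have hxy : x ≠ y := fun h => hx.2 (h ▸ Finset.mem_insert_self _ _)
    exfalso
    have hsC : s ∈ C := by
      simp only [Finset.mem_insert, Finset.mem_singleton] at hs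
      rcases hs with rfl | rfl
      · exact hd1
      · exact hd2
    have hxext : x ∈ ext G A C := mem_ext.2 ⟨⟨hx.1, hxC⟩, s, hsC, hadj.symm⟩
    rw [hy, Finset.mem_singleton] at hxext
    exact hxy hxext
  · intro C'' hC''AX hC''clq hC''iso
    right
    have hextne : (ext G A C'').Nonempty := by
      rcases Finset.eq_empty_or_nonempty (ext G A C'') with he | h
      · exact absurd ((isoIn_iff_ext_empty (hC''AX.trans Finset.sdiff_subset)).2 he)
          (hnoiso C'' (hC''AX.trans Finset.sdiff_subset) hC''clq)
      · exact h
    obtain ⟨x, hx⟩ := hextne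
    have hxX : x ∈ insert y C := pin_attach hC''AX hC''iso hx
    obtain ⟨⟨hxA, hxC''⟩, c'', hc'', hadjx⟩ := mem_ext.1 hx
    rw [Finset.mem_insert] at hxX
    rcases hxX with rfl | hxC
    · exact ⟨x, Finset.mem_sdiff.2 ⟨Finset.mem_insert_self _ _, hyR⟩, c'', hc'', hadjx⟩
    · exfalso
      have hc''AX : c'' ∈ A \ insert y C := hC''AX hc''
      rw [Finset.mem_sdiff] at hc''AX
      have hc''C : c'' ∉ C := fun h => hc''AX.2 (Finset.mem_insert_of_mem h)
      have hcext : c'' ∈ ext G A C := mem_ext.2 ⟨⟨hc''AX.1, hc''C⟩, x, hxC, hadjx.symm⟩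
      rw [hy, Finset.mem_singleton] at hcext
      exact hc''AX.2 (hcext ▸ Finset.mem_insert_self _ _)



/-- In the `e = 2` case (attachment set `{y, z}`), the simple chunk `insert y C`
with representatives `{α, β}`, provided protection witnesses against `z` and no z-blob. -/
lemma case2_attach (hω : 3 ≤ ω) (hfree : ∀ s : Finset V, G.IsClique (s : Set V) → s.card ≤ ω)
    {A Y C : Finset V} {y z α β : V} (hCA : C ⊆ A) (hCclq : G.IsNClique ω C)
    (hnoiso : ∀ C' : Finset V, C' ⊆ A → G.IsNClique ω C' → ¬ IsoIn G A C')
    (hE : ext G A C = {y, z})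
    (hnb : ∀ C' : Finset V, C' ⊆ A \ insert y C → G.IsNClique ω C' → z ∈ C' →
      ¬ (ext G A C' ⊆ C))
    (hαC : α ∈ C) (hβC : β ∈ C) (hαβ : α ≠ β)
    (hyα : G.Adj y α) (hyβ : ¬ G.Adj y β)
    (hwitα : G.Adj z α → ∃ w ∈ insert y C \ ({α, β} : Finset V),
      Xor' (G.Adj w α) (G.Adj w z))
    (hwitβ : G.Adj z β → ∃ w ∈ insert y C \ ({α, β} : Finset V),
      Xor' (G.Adj w β) (G.Adj w z))
    (hInv : Inv G ω A Y)
    (IH : ∀ m, m < A.card → ∀ A' Y' : Finset V, A'.card = m → Inv G ω A' Y' →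
      ∃ T' : Finset V, T' ⊆ A' ∧ A'.card ≤ (ω - 1) * T'.card ∧ GoodOn G A' Y' T') :
    ∃ T : Finset V, T ⊆ A ∧ A.card ≤ (ω - 1) * T.card ∧ GoodOn G A Y T := by
  classical
  have hyext : y ∈ ext G A C := by rw [hE]; exact Finset.mem_insert_self _ _
  obtain ⟨⟨hyA, hyC⟩, -⟩ := mem_ext.1 hyext
  have hXA : insert y C ⊆ A := Finset.insert_subset hyA hCA
  have hRX : ({α, β} : Finset V) ⊆ insert y C := by
    intro a ha
    simp only [Finset.mem_insert, Finset.mem_singleton] at ha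
    rcases ha with rfl | rfl
    · exact Finset.mem_insert_of_mem hαC
    · exact Finset.mem_insert_of_mem hβC
  have hyR : y ∉ ({α, β} : Finset V) := by
    simp only [Finset.mem_insert, Finset.mem_singleton]
    rintro (rfl | rfl)
    · exact hyC hαC
    · exact hyC hβC
  refine step hfree hXA ⟨y, Finset.mem_insert_self _ _⟩ hRX hInv ?_ ?_ ?_ ?_ IH
  · rw [Finset.card_insert_of_notMem hyC, hCclq.card_eq, Finset.card_pair hαβ]
    omega
  · intro u hu v hv hadj
    refine ⟨y, Finset.mem_union_left _
      (Finset.mem_sdiff.2 ⟨Finset.mem_insert_self _ _, hyR⟩), ?_⟩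
    simp only [Finset.mem_insert, Finset.mem_singleton] at hu hv
    rcases hu with rfl | rfl <;> rcases hv with rfl | rfl
    · exact absurd rfl hadj.ne
    · exact Or.inl ⟨hyα, hyβ⟩
    · exact Or.inr ⟨hyα, hyβ⟩
    · exact absurd rfl hadj.ne
  · intro s hs x hx hadj
    rw [Finset.mem_sdiff] at hx
    have hxC : x ∉ C := fun h => hx.2 (Finset.mem_insert_of_mem h)
    have hxy : x ≠ y := fun h => hx.2 (h ▸ Finset.mem_insert_self _ _)
    have hsC : s ∈ C := by
      simp only [Finset.mem_insert, Finset.mem_singleton] at hs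
      rcases hs with rfl | rfl
      · exact hαC
      · exact hβC
    have hxext : x ∈ ext G A C := mem_ext.2 ⟨⟨hx.1, hxC⟩, s, hsC, hadj.symm⟩
    rw [hE] at hxext
    simp only [Finset.mem_insert, Finset.mem_singleton] at hxext
    rcases hxext with rfl | rfl
    · exact absurd rfl hxy
    · -- x = z
      simp only [Finset.mem_insert, Finset.mem_singleton] at hs
      rcases hs with rfl | rfl
      · obtain ⟨w, hw, hxor⟩ := hwitα hadj.symm
        exact ⟨w, Finset.mem_union_left _ hw, hxor⟩
      · obtain ⟨w, hw, hxor⟩ := hwitβ hadj.symm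
        exact ⟨w, Finset.mem_union_left _ hw, hxor⟩
  · intro C'' hC''AX hC''clq hC''iso
    right
    by_cases hy : ∃ c'' ∈ C'', G.Adj y c''
    · obtain ⟨c'', hc'', hadj⟩ := hy
      exact ⟨y, Finset.mem_sdiff.2 ⟨Finset.mem_insert_self _ _, hyR⟩, c'', hc'', hadj⟩
    · exfalso
      push_neg at hy
      have hextC : ext G A C'' ⊆ C := by
        intro x hx
        have hxX : x ∈ insert y C := pin_attach hC''AX hC''iso hx
        rw [Finset.mem_insert] at hxX
        rcases hxX with rfl | hxC
        · obtain ⟨-, c'', hc'', hadjx⟩ := mem_ext.1 hx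
          exact absurd hadjx (hy c'' hc'')
        · exact hxC
      have hextne : (ext G A C'').Nonempty := by
        rcases Finset.eq_empty_or_nonempty (ext G A C'') with he | h
        · exact absurd ((isoIn_iff_ext_empty (hC''AX.trans Finset.sdiff_subset)).2 he)
            (hnoiso C'' (hC''AX.trans Finset.sdiff_subset) hC''clq)
        · exact h
      obtain ⟨x, hx⟩ := hextne
      have hxC : x ∈ C := hextC hx
      obtain ⟨⟨hxA, hxC''⟩, c'', hc'', hadjx⟩ := mem_ext.1 hx
      have hc''AX : c'' ∈ A \ insert y C := hC''AX hc''
      rw [Finset.mem_sdiff] at hc''AX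
      have hc''C : c'' ∉ C := fun h => hc''AX.2 (Finset.mem_insert_of_mem h)
      have hc''ext : c'' ∈ ext G A C :=
        mem_ext.2 ⟨⟨hc''AX.1, hc''C⟩, x, hxC, hadjx.symm⟩
      rw [hE] at hc''ext
      simp only [Finset.mem_insert, Finset.mem_singleton] at hc''ext
      rcases hc''ext with rfl | rfl
      · exact hc''AX.2 (Finset.mem_insert_self _ _)
      · exact hnb C'' hC''AX hC''clq hc'' hextC


lemma case2_mega (hω : 3 ≤ ω) (hfree : ∀ s : Finset V, G.IsClique (s : Set V) → s.card ≤ ω)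
    {A Y C : Finset V} {y z : V} (hCA : C ⊆ A) (hCclq : G.IsNClique ω C)
    (hnoiso : ∀ C' : Finset V, C' ⊆ A → G.IsNClique ω C' → ¬ IsoIn G A C')
    (hmin : ∀ C' : Finset V, C' ⊆ A → G.IsNClique ω C' → (ext G A C).card ≤ (ext G A C').card)
    (hyz : y ≠ z) (hE : ext G A C = {y, z})
    (hblob : ∃ C' : Finset V, C' ⊆ A \ insert y C ∧ G.IsNClique ω C' ∧ z ∈ C' ∧
      ext G A C' ⊆ C)
    (hInv : Inv G ω A Y)
    (IH : ∀ m, m < A.card → ∀ A' Y' : Finset V, A'.card = m → Inv G ω A' Y' →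
      ∃ T' : Finset V, T' ⊆ A' ∧ A'.card ≤ (ω - 1) * T'.card ∧ GoodOn G A' Y' T') :
    ∃ T : Finset V, T ⊆ A ∧ A.card ≤ (ω - 1) * T.card ∧ GoodOn G A Y T := by
  classical
  obtain ⟨C', hC'sub, hC'clq, hzC', hC'ext⟩ := hblob
  have hyext : y ∈ ext G A C := by rw [hE]; exact Finset.mem_insert_self _ _
  have hzext : z ∈ ext G A C := by
    rw [hE]; exact Finset.mem_insert_of_mem (Finset.mem_singleton_self z)
  obtain ⟨⟨hyA, hyC⟩, cY, hcY, hyadjC⟩ := mem_ext.1 hyext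
  obtain ⟨⟨hzA, hzC⟩, -⟩ := mem_ext.1 hzext
  have hC'A : C' ⊆ A := hC'sub.trans Finset.sdiff_subset
  have hCC' : ∀ a ∈ C', a ∉ C := by
    intro a ha hc
    have := hC'sub ha
    rw [Finset.mem_sdiff] at this
    exact this.2 (Finset.mem_insert_of_mem hc)
  have hyC' : y ∉ C' := by
    intro h
    have := hC'sub h
    rw [Finset.mem_sdiff] at this
    exact this.2 (Finset.mem_insert_self _ _)
  -- F1 : non-z members of C' have no neighbours outside C' (within A)
  have F1 : ∀ c' ∈ C', c' ≠ z → ∀ v ∈ A, v ∉ C' → ¬ G.Adj c' v := by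
    intro c' hc' hne v hvA hvC' hadj
    have hvext : v ∈ ext G A C' := mem_ext.2 ⟨⟨hvA, hvC'⟩, c', hc', hadj.symm⟩
    have hvC : v ∈ C := hC'ext hvext
    have hc'ext : c' ∈ ext G A C := mem_ext.2 ⟨⟨hC'A hc', hCC' c' hc'⟩, v, hvC, hadj⟩
    rw [hE] at hc'ext
    simp only [Finset.mem_insert, Finset.mem_singleton] at hc'ext
    rcases hc'ext with rfl | rfl
    · exact hyC' hc'
    · exact hne rfl
  -- F2 : neighbours of C outside C (within A) are y or z
  have F2 : ∀ c ∈ C, ∀ v ∈ A, v ∉ C → G.Adj c v → v = y ∨ v = z := by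
    intro c hc v hvA hvC hadj
    have hvext : v ∈ ext G A C := mem_ext.2 ⟨⟨hvA, hvC⟩, c, hc, hadj.symm⟩
    rw [hE] at hvext
    simp only [Finset.mem_insert, Finset.mem_singleton] at hvext
    exact hvext
  set Z0 := C.filter (fun c => G.Adj z c) with hZ0
  set Y0 := C.filter (fun c => G.Adj y c) with hY0
  have hsubZ0 : ext G A C' ⊆ Z0 := by
    intro x hx
    have hxC : x ∈ C := hC'ext hx
    obtain ⟨⟨hxA, hxC'⟩, c', hc', hadjx⟩ := mem_ext.1 hx
    have hc'ext : c' ∈ ext G A C := mem_ext.2 ⟨⟨hC'A hc', hCC' c' hc'⟩, x, hxC, hadjx.symm⟩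
    rw [hE] at hc'ext
    simp only [Finset.mem_insert, Finset.mem_singleton] at hc'ext
    rcases hc'ext with rfl | rfl
    · exact absurd hc' hyC'
    · exact Finset.mem_filter.2 ⟨hxC, hadjx.symm⟩
  have hZ0two : 2 ≤ Z0.card := by
    have h1 := hmin C' hC'A hC'clq
    rw [hE, Finset.card_pair hyz] at h1
    exact le_trans h1 (Finset.card_le_card hsubZ0)
  have hY0ne : Y0.Nonempty := ⟨cY, Finset.mem_filter.2 ⟨hcY, hyadjC⟩⟩
  obtain ⟨b0, hb0C, hb0nadj⟩ := not_all_adj hfree hCclq hyC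
  have hb0CY : b0 ∈ C \ Y0 := by
    rw [Finset.mem_sdiff]
    exact ⟨hb0C, fun h => hb0nadj (Finset.mem_filter.1 h).2⟩
  -- selection of α, β, ζ
  have hsel : ∃ α β ζ : V, α ∈ Y0 ∧ β ∈ C \ Y0 ∧ ζ ∈ Z0 ∧ ζ ≠ α ∧ ζ ≠ β := by
    obtain ⟨ζ1, hζ1, ζ2, hζ2, hζne⟩ := Finset.one_lt_card.1 (by omega : 1 < Z0.card)
    by_cases hcase : ∃ α ∈ Y0, α ≠ ζ1
    · obtain ⟨α, hα, hαζ⟩ := hcase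
      by_cases hcase2 : ∃ β ∈ C \ Y0, β ≠ ζ1
      · obtain ⟨β, hβ, hβζ⟩ := hcase2
        exact ⟨α, β, ζ1, hα, hβ, hζ1, Ne.symm hαζ, Ne.symm hβζ⟩
      · push_neg at hcase2
        have hb0ζ : b0 = ζ1 := by
          by_contra h
          exact h (by_contra fun h2 => h (hcase2 b0 hb0CY))
        have hYcard : 2 ≤ Y0.card := by
          have hCsub : C ⊆ insert ζ1 Y0 := by
            intro c hc
            by_cases hcY0 : c ∈ Y0
            · exact Finset.mem_insert_of_mem hcY0
            · have : c = ζ1 := hcase2 c (Finset.mem_sdiff.2 ⟨hc, hcY0⟩)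
              exact this ▸ Finset.mem_insert_self _ _
          have h1 := Finset.card_le_card hCsub
          rw [hCclq.card_eq] at h1
          have h2 := Finset.card_insert_le ζ1 Y0
          omega
        obtain ⟨α', hα'Y0, hα'ζ2⟩ :=
          Finset.exists_mem_ne (by omega : 1 < Y0.card) ζ2
        refine ⟨α', b0, ζ2, hα'Y0, hb0CY, hζ2, Ne.symm hα'ζ2, ?_⟩
        rw [hb0ζ]
        exact hζne.symm
    · push_neg at hcase
      obtain ⟨α0, hα0⟩ := hY0ne
      have hα0ζ : α0 = ζ1 := hcase α0 hα0
      have hCYcard : 2 ≤ (C \ Y0).card := by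
        have hCsub : C ⊆ insert ζ1 (C \ Y0) := by
          intro c hc
          by_cases hcY0 : c ∈ Y0
          · exact (hcase c hcY0) ▸ Finset.mem_insert_self _ _
          · exact Finset.mem_insert_of_mem (Finset.mem_sdiff.2 ⟨hc, hcY0⟩)
        have h1 := Finset.card_le_card hCsub
        rw [hCclq.card_eq] at h1
        have h2 := Finset.card_insert_le ζ1 (C \ Y0)
        omega
      obtain ⟨β, hβ, hβζ2⟩ :=
        Finset.exists_mem_ne (by omega : 1 < (C \ Y0).card) ζ2
      refine ⟨α0, β, ζ2, hα0, hβ, hζ2, ?_, Ne.symm hβζ2⟩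
      rw [hα0ζ]
      exact hζne.symm
  obtain ⟨α, β, ζ, hαY0, hβCY0, hζZ0, hζα, hζβ⟩ := hsel
  have hαC : α ∈ C := (Finset.mem_filter.1 hαY0).1
  have hyadjα : G.Adj y α := (Finset.mem_filter.1 hαY0).2
  have hβC : β ∈ C := (Finset.mem_sdiff.1 hβCY0).1
  have hynadjβ : ¬ G.Adj y β :=
    fun h => (Finset.mem_sdiff.1 hβCY0).2 (Finset.mem_filter.2 ⟨hβC, h⟩)
  have hαβ : α ≠ β := fun h => (Finset.mem_sdiff.1 hβCY0).2 (h ▸ hαY0)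
  have hζC : ζ ∈ C := (Finset.mem_filter.1 hζZ0).1
  have hzadjζ : G.Adj z ζ := (Finset.mem_filter.1 hζZ0).2
  -- pick c' and c''0 in C' \ {z}
  have herase : 1 < (C'.erase z).card := by
    rw [Finset.card_erase_of_mem hzC', hC'clq.card_eq]
    omega
  obtain ⟨c', hc'e, c''0, hc''0e, hc'ne⟩ := Finset.one_lt_card.1 herase
  have hc'C' : c' ∈ C' := Finset.mem_of_mem_erase hc'e
  have hc'z : c' ≠ z := Finset.ne_of_mem_erase hc'e
  have hc''0C' : c''0 ∈ C' := Finset.mem_of_mem_erase hc''0e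
  have hc''0z : c''0 ≠ z := Finset.ne_of_mem_erase hc''0e
  -- the chunk
  have hyCC' : y ∉ C ∪ C' := by
    rw [Finset.mem_union]
    rintro (h | h)
    · exact hyC h
    · exact hyC' h
  have hdisjCC' : Disjoint C C' := Finset.disjoint_right.2 hCC'
  have hXA : insert y (C ∪ C') ⊆ A :=
    Finset.insert_subset hyA (Finset.union_subset hCA hC'A)
  have hαC'n : α ∉ C' := fun h => hCC' α h hαC
  have hβC'n : β ∉ C' := fun h => hCC' β h hβC
  have hζC'n : ζ ∉ C' := fun h => hCC' ζ h hζC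
  have hαz : α ≠ z := fun h => hzC (h ▸ hαC)
  have hβz : β ≠ z := fun h => hzC (h ▸ hβC)
  have hαc' : α ≠ c' := fun h => hαC'n (h ▸ hc'C')
  have hβc' : β ≠ c' := fun h => hβC'n (h ▸ hc'C')
  have hzc' : z ≠ c' := Ne.symm hc'z
  have hRX : ({α, β, z, c'} : Finset V) ⊆ insert y (C ∪ C') := by
    intro a ha
    simp only [Finset.mem_insert, Finset.mem_singleton] at ha
    rcases ha with rfl | rfl | rfl | rfl
    · exact Finset.mem_insert_of_mem (Finset.mem_union_left _ hαC)
    · exact Finset.mem_insert_of_mem (Finset.mem_union_left _ hβC)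
    · exact Finset.mem_insert_of_mem (Finset.mem_union_right _ hzC')
    · exact Finset.mem_insert_of_mem (Finset.mem_union_right _ hc'C')
  have hyR : y ∉ ({α, β, z, c'} : Finset V) := by
    simp only [Finset.mem_insert, Finset.mem_singleton]
    push_neg
    exact ⟨fun h => hyC (h ▸ hαC), fun h => hyC (h ▸ hβC), hyz,
      fun h => hyC' (h ▸ hc'C')⟩
  have hc''0R : c''0 ∉ ({α, β, z, c'} : Finset V) := by
    simp only [Finset.mem_insert, Finset.mem_singleton]
    push_neg
    exact ⟨fun h => hCC' c''0 hc''0C' (h ▸ hαC), fun h => hCC' c''0 hc''0C' (h ▸ hβC),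
      hc''0z, hc'ne.symm⟩
  have hζR : ζ ∉ ({α, β, z, c'} : Finset V) := by
    simp only [Finset.mem_insert, Finset.mem_singleton]
    push_neg
    exact ⟨hζα, hζβ, fun h => hzC (h ▸ hζC), fun h => hζC'n (h ▸ hc'C')⟩
  have hymem : y ∈ insert y (C ∪ C') \ ({α, β, z, c'} : Finset V) :=
    Finset.mem_sdiff.2 ⟨Finset.mem_insert_self _ _, hyR⟩
  have hc''0mem : c''0 ∈ insert y (C ∪ C') \ ({α, β, z, c'} : Finset V) :=
    Finset.mem_sdiff.2
      ⟨Finset.mem_insert_of_mem (Finset.mem_union_right _ hc''0C'), hc''0R⟩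
  have hζmem : ζ ∈ insert y (C ∪ C') \ ({α, β, z, c'} : Finset V) :=
    Finset.mem_sdiff.2 ⟨Finset.mem_insert_of_mem (Finset.mem_union_left _ hζC), hζR⟩
  refine step hfree hXA ⟨y, Finset.mem_insert_self _ _⟩ hRX hInv ?_ ?_ ?_ ?_ IH
  · -- c1 : cardinality
    have hcardX : (insert y (C ∪ C')).card = 2 * ω + 1 := by
      rw [Finset.card_insert_of_notMem hyCC', Finset.card_union_of_disjoint hdisjCC',
        hCclq.card_eq, hC'clq.card_eq]
      ring
    have hcardR : ({α, β, z, c'} : Finset V).card = 4 := by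
      rw [Finset.card_insert_of_notMem, Finset.card_insert_of_notMem,
        Finset.card_insert_of_notMem, Finset.card_singleton]
      · simp only [Finset.mem_singleton]
        exact hzc'
      · simp only [Finset.mem_insert, Finset.mem_singleton]
        push_neg
        exact ⟨hβz, hβc'⟩
      · simp only [Finset.mem_insert, Finset.mem_singleton]
        push_neg
        exact ⟨hαβ, hαz, hαc'⟩
    rw [hcardX, hcardR]
    omega
  · -- c2 : internal pairs
    intro u hu v hv hadj
    simp only [Finset.mem_insert, Finset.mem_singleton] at hu hv
    rcases hu with hu | hu | hu | hu <;> rcases hv with hv | hv | hv | hv <;>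
      rw [hu, hv] at hadj ⊢
    · exact absurd rfl hadj.ne
    · exact ⟨y, Finset.mem_union_left _ hymem, Or.inl ⟨hyadjα, hynadjβ⟩⟩
    · exact ⟨c''0, Finset.mem_union_left _ hc''0mem,
        Or.inr ⟨(hC'clq.isClique hc''0C' hzC' hc''0z),
          fun h => F1 c''0 hc''0C' hc''0z α (hCA hαC) hαC'n h⟩⟩
    · exact absurd hadj.symm (F1 c' hc'C' hc'z α (hCA hαC) hαC'n)
    · exact ⟨y, Finset.mem_union_left _ hymem, Or.inr ⟨hyadjα, hynadjβ⟩⟩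
    · exact absurd rfl hadj.ne
    · exact ⟨c''0, Finset.mem_union_left _ hc''0mem,
        Or.inr ⟨(hC'clq.isClique hc''0C' hzC' hc''0z),
          fun h => F1 c''0 hc''0C' hc''0z β (hCA hβC) hβC'n h⟩⟩
    · exact absurd hadj.symm (F1 c' hc'C' hc'z β (hCA hβC) hβC'n)
    · exact ⟨c''0, Finset.mem_union_left _ hc''0mem,
        Or.inl ⟨(hC'clq.isClique hc''0C' hzC' hc''0z),
          fun h => F1 c''0 hc''0C' hc''0z α (hCA hαC) hαC'n h⟩⟩
    · exact ⟨c''0, Finset.mem_union_left _ hc''0mem,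
        Or.inl ⟨(hC'clq.isClique hc''0C' hzC' hc''0z),
          fun h => F1 c''0 hc''0C' hc''0z β (hCA hβC) hβC'n h⟩⟩
    · exact absurd rfl hadj.ne
    · exact ⟨ζ, Finset.mem_union_left _ hζmem,
        Or.inl ⟨hzadjζ.symm, fun h => F1 c' hc'C' hc'z ζ (hCA hζC) hζC'n h.symm⟩⟩
    · exact absurd hadj (F1 c' hc'C' hc'z α (hCA hαC) hαC'n)
    · exact absurd hadj (F1 c' hc'C' hc'z β (hCA hβC) hβC'n)
    · exact ⟨ζ, Finset.mem_union_left _ hζmem,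
        Or.inr ⟨hzadjζ.symm, fun h => F1 c' hc'C' hc'z ζ (hCA hζC) hζC'n h.symm⟩⟩
    · exact absurd rfl hadj.ne
  · -- c3 : protection
    intro s hs x hx hadj
    rw [Finset.mem_sdiff] at hx
    have hxC : x ∉ C :=
      fun h => hx.2 (Finset.mem_insert_of_mem (Finset.mem_union_left _ h))
    have hxC' : x ∉ C' :=
      fun h => hx.2 (Finset.mem_insert_of_mem (Finset.mem_union_right _ h))
    have hxy : x ≠ y := fun h => hx.2 (h ▸ Finset.mem_insert_self _ _)
    have hxz : x ≠ z := fun h => hxC' (h ▸ hzC')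
    simp only [Finset.mem_insert, Finset.mem_singleton] at hs
    rcases hs with hs | hs | hs | hs <;> rw [hs] at hadj ⊢
    · rcases F2 α hαC x hx.1 hxC hadj with rfl | rfl
      · exact absurd rfl hxy
      · exact absurd rfl hxz
    · rcases F2 β hβC x hx.1 hxC hadj with rfl | rfl
      · exact absurd rfl hxy
      · exact absurd rfl hxz
    · exact ⟨c''0, Finset.mem_union_left _ hc''0mem,
        Or.inl ⟨(hC'clq.isClique hc''0C' hzC' hc''0z),
          fun h => F1 c''0 hc''0C' hc''0z x hx.1 hxC' h⟩⟩
    · exact absurd hadj (F1 c' hc'C' hc'z x hx.1 hxC')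
  · -- c4 : no pinned cliques
    intro C'' hC''AX hC''clq hC''iso
    right
    by_cases hy : ∃ c'' ∈ C'', G.Adj y c''
    · obtain ⟨c'', hc'', hadj⟩ := hy
      exact ⟨y, hymem, c'', hc'', hadj⟩
    · exfalso
      push_neg at hy
      have hsub : ∀ x ∈ ext G A C'', x = z := by
        intro x hx
        have hxX : x ∈ insert y (C ∪ C') := pin_attach hC''AX hC''iso hx
        obtain ⟨⟨hxA, hxC''⟩, c'', hc'', hadjx⟩ := mem_ext.1 hx
        have hc''AX : c'' ∈ A \ insert y (C ∪ C') := hC''AX hc''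
        rw [Finset.mem_sdiff] at hc''AX
        have hc''C : c'' ∉ C := fun h =>
          hc''AX.2 (Finset.mem_insert_of_mem (Finset.mem_union_left _ h))
        have hc''C' : c'' ∉ C' := fun h =>
          hc''AX.2 (Finset.mem_insert_of_mem (Finset.mem_union_right _ h))
        rcases Finset.mem_insert.1 hxX with rfl | hxCC'
        · exact absurd hadjx (hy c'' hc'')
        rcases Finset.mem_union.1 hxCC' with hxC | hxC'
        · exfalso
          have hc''ext : c'' ∈ ext G A C :=
            mem_ext.2 ⟨⟨hc''AX.1, hc''C⟩, x, hxC, hadjx.symm⟩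
          rw [hE] at hc''ext
          simp only [Finset.mem_insert, Finset.mem_singleton] at hc''ext
          rcases hc''ext with rfl | rfl
          · exact hc''AX.2 (Finset.mem_insert_self _ _)
          · exact hc''AX.2 (Finset.mem_insert_of_mem (Finset.mem_union_right _ hzC'))
        · by_contra hne
          exact F1 x hxC' hne c'' hc''AX.1 hc''C' hadjx
      have hcard1 : (ext G A C'').card ≤ 1 := by
        have : ext G A C'' ⊆ {z} :=
          fun x hx => Finset.mem_singleton.2 (hsub x hx)
        calc (ext G A C'').card ≤ ({z} : Finset V).card := Finset.card_le_card this
        _ = 1 := Finset.card_singleton z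
      have h2 := hmin C'' (hC''AX.trans Finset.sdiff_subset) hC''clq
      rw [hE, Finset.card_pair hyz] at h2
      omega

lemma case2_two (hω : 3 ≤ ω) (hfree : ∀ s : Finset V, G.IsClique (s : Set V) → s.card ≤ ω)
    {A Y C : Finset V} (hCA : C ⊆ A) (hCclq : G.IsNClique ω C)
    (hnoiso : ∀ C' : Finset V, C' ⊆ A → G.IsNClique ω C' → ¬ IsoIn G A C')
    (hmin : ∀ C' : Finset V, C' ⊆ A → G.IsNClique ω C' → (ext G A C).card ≤ (ext G A C').card)
    (hE2 : (ext G A C).card = 2)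
    (hInv : Inv G ω A Y)
    (IH : ∀ m, m < A.card → ∀ A' Y' : Finset V, A'.card = m → Inv G ω A' Y' →
      ∃ T' : Finset V, T' ⊆ A' ∧ A'.card ≤ (ω - 1) * T'.card ∧ GoodOn G A' Y' T') :
    ∃ T : Finset V, T ⊆ A ∧ A.card ≤ (ω - 1) * T.card ∧ GoodOn G A Y T := by
  classical
  obtain ⟨y, z, hyz, hE⟩ := Finset.card_eq_two.1 hE2
  have hyext : y ∈ ext G A C := by rw [hE]; exact Finset.mem_insert_self _ _
  have hzext : z ∈ ext G A C := by
    rw [hE]; exact Finset.mem_insert_of_mem (Finset.mem_singleton_self z)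
  obtain ⟨⟨hyA, hyC⟩, cY, hcY, hyadjcY⟩ := mem_ext.1 hyext
  obtain ⟨⟨hzA, hzC⟩, cZ, hcZ, hzadjcZ⟩ := mem_ext.1 hzext
  have hE' : ext G A C = {z, y} := by rw [hE, Finset.pair_comm]
  by_cases hbz : ∃ C' : Finset V, C' ⊆ A \ insert y C ∧ G.IsNClique ω C' ∧ z ∈ C' ∧
      ext G A C' ⊆ C
  · exact case2_mega hω hfree hCA hCclq hnoiso hmin hyz hE hbz hInv IH
  by_cases hby : ∃ C' : Finset V, C' ⊆ A \ insert z C ∧ G.IsNClique ω C' ∧ y ∈ C' ∧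
      ext G A C' ⊆ C
  · exact case2_mega hω hfree hCA hCclq hnoiso hmin hyz.symm hE' hby hInv IH
  have hnbz : ∀ C' : Finset V, C' ⊆ A \ insert y C → G.IsNClique ω C' → z ∈ C' →
      ¬ (ext G A C' ⊆ C) := fun C' h1 h2 h3 h4 => hbz ⟨C', h1, h2, h3, h4⟩
  have hnby : ∀ C' : Finset V, C' ⊆ A \ insert z C → G.IsNClique ω C' → y ∈ C' →
      ¬ (ext G A C' ⊆ C) := fun C' h1 h2 h3 h4 => hby ⟨C', h1, h2, h3, h4⟩
  obtain ⟨a0, ha0C, hznadj⟩ := not_all_adj hfree hCclq hzC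
  obtain ⟨b0, hb0C, hynadjb0⟩ := not_all_adj hfree hCclq hyC
  by_cases h1 : (∃ α ∈ C, G.Adj y α ∧ α ≠ a0) ∧ (∃ β ∈ C, ¬G.Adj y β ∧ β ≠ a0)
  · -- branch S1 : avoid a0, use it as universal witness
    obtain ⟨⟨α, hαC, hyα, hαa0⟩, ⟨β, hβC, hyβ, hβa0⟩⟩ := h1
    have hαβ : α ≠ β := by rintro rfl; exact hyβ hyα
    have ha0mem : a0 ∈ insert y C \ ({α, β} : Finset V) := by
      rw [Finset.mem_sdiff]
      refine ⟨Finset.mem_insert_of_mem ha0C, ?_⟩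
      simp only [Finset.mem_insert, Finset.mem_singleton]
      push_neg
      exact ⟨fun h => hαa0 h.symm, fun h => hβa0 h.symm⟩
    refine case2_attach hω hfree hCA hCclq hnoiso hE hnbz hαC hβC hαβ hyα hyβ
      ?_ ?_ hInv IH
    · intro hzα
      exact ⟨a0, ha0mem, Or.inl ⟨hCclq.isClique ha0C hαC (fun h => hαa0 h.symm),
        fun h => hznadj h.symm⟩⟩
    · intro hzβ
      exact ⟨a0, ha0mem, Or.inl ⟨hCclq.isClique ha0C hβC (fun h => hβa0 h.symm),
        fun h => hznadj h.symm⟩⟩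
  rcases not_and_or.1 h1 with h | h
  · -- all y-neighbours in C equal a0
    push_neg at h
    have hcYa0 : cY = a0 := h cY hcY hyadjcY
    have hya0 : G.Adj y a0 := hcYa0 ▸ hyadjcY
    by_cases hyz' : G.Adj y z
    · -- attach y with α := a0, β := b0
      have hb0a0 : b0 ≠ a0 := fun hh => hynadjb0 (hh ▸ hya0)
      refine case2_attach hω hfree hCA hCclq hnoiso hE hnbz ha0C hb0C
        (Ne.symm hb0a0) hya0 hynadjb0 ?_ ?_ hInv IH
      · intro hza0
        exact absurd hza0 hznadj
      · intro hzb0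
        refine ⟨y, ?_, Or.inr ⟨hyz', hynadjb0⟩⟩
        rw [Finset.mem_sdiff]
        refine ⟨Finset.mem_insert_self _ _, ?_⟩
        simp only [Finset.mem_insert, Finset.mem_singleton]
        push_neg
        exact ⟨fun hh => hyC (hh ▸ ha0C), fun hh => hyC (hh ▸ hb0C)⟩
    · -- attach z with α := cZ, β := a0
      have hcZa0 : cZ ≠ a0 := fun hh => hznadj (hh ▸ hzadjcZ)
      have hγne : (C \ ({cZ, a0} : Finset V)).Nonempty := by
        rw [← Finset.card_pos]
        have h2 : ({cZ, a0} : Finset V).card ≤ 2 :=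
          le_trans (Finset.card_insert_le _ _) (by simp)
        have h3 := Finset.card_le_card_sdiff_add_card (s := C) (t := ({cZ, a0} : Finset V))
        have h4 := hCclq.card_eq
        omega
      obtain ⟨γ, hγ⟩ := hγne
      rw [Finset.mem_sdiff] at hγ
      obtain ⟨hγC, hγn⟩ := hγ
      simp only [Finset.mem_insert, Finset.mem_singleton] at hγn
      push_neg at hγn
      refine case2_attach hω hfree hCA hCclq hnoiso hE' hnby hcZ ha0C hcZa0
        hzadjcZ hznadj ?_ ?_ hInv IH
      · intro hycZ
        exact absurd (h cZ hcZ hycZ) hcZa0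
      · intro hya0'
        refine ⟨γ, ?_, Or.inl ⟨hCclq.isClique hγC ha0C hγn.2, ?_⟩⟩
        · rw [Finset.mem_sdiff]
          refine ⟨Finset.mem_insert_of_mem hγC, ?_⟩
          simp only [Finset.mem_insert, Finset.mem_singleton]
          push_neg
          exact hγn
        · intro hh
          exact hγn.2 (h γ hγC hh.symm)
  · -- all y-non-neighbours in C equal a0, i.e. y is adjacent to C \ {a0}
    push_neg at h
    have hyall : ∀ c ∈ C, c ≠ a0 → G.Adj y c := by
      intro c hc hne
      by_contra hn
      exact hne (h c hc hn)
    have hyna0 : ¬ G.Adj y a0 := by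
      have hb0a0 : b0 = a0 := h b0 hb0C hynadjb0
      exact hb0a0 ▸ hynadjb0
    by_cases hsplit : ∃ α ∈ C, G.Adj y α ∧ ¬ G.Adj z α
    · obtain ⟨α, hαC, hyα, hznα⟩ := hsplit
      have hαa0 : α ≠ a0 := fun hh => hyna0 (hh ▸ hyα)
      refine case2_attach hω hfree hCA hCclq hnoiso hE hnbz hαC ha0C hαa0
        hyα hyna0 ?_ ?_ hInv IH
      · intro hzα
        exact absurd hzα hznα
      · intro hza0
        exact absurd hza0 hznadj
    · push_neg at hsplit
      by_cases hyz' : G.Adj y z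
      · -- ω+1 clique contradiction
        exfalso
        have h1' := clique_erase hCclq ha0C
        have h2' := h1'.insert (a := z) (fun b hb => by
          rw [Finset.mem_erase] at hb
          exact hsplit b hb.2 (hyall b hb.2 hb.1))
        have h3' := h2'.insert (a := y) (fun b hb => by
          rw [Finset.mem_insert] at hb
          rcases hb with rfl | hb
          · exact hyz'
          · rw [Finset.mem_erase] at hb
            exact hyall b hb.2 hb.1)
        have h4' := hfree _ h3'.isClique
        rw [h3'.card_eq] at h4'
        omega
      · -- attach y with α := cY, β := a0
        have hcYa0 : cY ≠ a0 := fun hh => hyna0 (hh ▸ hyadjcY)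
        refine case2_attach hω hfree hCA hCclq hnoiso hE hnbz hcY ha0C hcYa0
          hyadjcY hyna0 ?_ ?_ hInv IH
        · intro hzcY
          refine ⟨y, ?_, Or.inl ⟨hyadjcY, hyz'⟩⟩
          rw [Finset.mem_sdiff]
          refine ⟨Finset.mem_insert_self _ _, ?_⟩
          simp only [Finset.mem_insert, Finset.mem_singleton]
          push_neg
          exact ⟨fun hh => hyC (hh ▸ hcY), fun hh => hyC (hh ▸ ha0C)⟩
        · intro hza0
          exact absurd hza0 hznadj

lemma main (hω : 3 ≤ ω) (hfree : ∀ s : Finset V, G.IsClique (s : Set V) → s.card ≤ ω) :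
    ∀ n : ℕ, ∀ A Y : Finset V, A.card = n → Inv G ω A Y →
      ∃ T : Finset V, T ⊆ A ∧ A.card ≤ (ω - 1) * T.card ∧ GoodOn G A Y T := by
  classical
  intro n
  induction n using Nat.strong_induction_on with
  | _ n IH =>
  intro A Y hAn hInv
  have IH' : ∀ m, m < A.card → ∀ A' Y' : Finset V, A'.card = m → Inv G ω A' Y' →
      ∃ T' : Finset V, T' ⊆ A' ∧ A'.card ≤ (ω - 1) * T'.card ∧ GoodOn G A' Y' T' := by
    intro m hm A' Y' h1 h2
    exact IH m (hAn ▸ hm) A' Y' h1 h2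
  rcases Finset.eq_empty_or_nonempty A with rfl | hAne
  · exact ⟨∅, by simp, by simp, fun u hu => by simp at hu⟩
  by_cases hKω : ∃ C : Finset V, C ⊆ A ∧ G.IsNClique ω C
  · by_cases hIso : ∃ C : Finset V, C ⊆ A ∧ G.IsNClique ω C ∧ IsoIn G A C
    · -- CASE 1 : an isolated ω-clique, serviced by Y
      obtain ⟨C, hCA, hCclq, hCiso⟩ := hIso
      obtain ⟨y, hyY, ⟨d1, hd1, hadj1⟩, ⟨d2, hd2, hadj2⟩⟩ := hInv C hCA hCclq hCiso
      have hd12 : d1 ≠ d2 := by rintro rfl; exact hadj2 hadj1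
      have hRC : ({d1, d2} : Finset V) ⊆ C := by
        intro x hx
        rcases Finset.mem_insert.1 hx with rfl | hx
        · exact hd1
        · rw [Finset.mem_singleton] at hx; subst hx; exact hd2
      refine step hfree hCA ⟨d1, hd1⟩ hRC hInv ?_ ?_ ?_ ?_ IH'
      · rw [Finset.card_pair hd12, hCclq.card_eq]
        omega
      · intro u hu v hv hadj
        simp only [Finset.mem_insert, Finset.mem_singleton] at hu hv
        refine ⟨y, Finset.mem_union_right _ hyY, ?_⟩
        rcases hu with rfl | rfl <;> rcases hv with rfl | rfl
        · exact absurd rfl hadj.ne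
        · exact Or.inl ⟨hadj1, hadj2⟩
        · exact Or.inr ⟨hadj1, hadj2⟩
        · exact absurd rfl hadj.ne
      · intro t ht x hx hadj
        rw [Finset.mem_sdiff] at hx
        exact absurd hadj (hCiso t (hRC ht) x hx.1 hx.2)
      · intro C' hC'A hC'clq hC'iso
        left
        intro c' hc' x hxA hxC' hadj
        by_cases hxC : x ∈ C
        · have hc'A : c' ∈ A \ C := hC'A hc'
          rw [Finset.mem_sdiff] at hc'A
          exact hCiso x hxC c' hc'A.1 hc'A.2 hadj.symm
        · have hxAX : x ∈ A \ C := Finset.mem_sdiff.2 ⟨hxA, hxC⟩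
          exact hC'iso c' hc' x hxAX hxC' hadj
    · -- CASE 2 : ω-cliques exist, none isolated
      obtain ⟨C0, hC0A, hC0⟩ := hKω
      have h𝒮ne : (A.powerset.filter (fun s : Finset V => G.IsNClique ω s)).Nonempty :=
        ⟨C0, by rw [Finset.mem_filter, Finset.mem_powerset]; exact ⟨hC0A, hC0⟩⟩
      obtain ⟨C, hC𝒮, hCmin⟩ :=
        Finset.exists_min_image _ (fun s => (ext G A s).card) h𝒮ne
      rw [Finset.mem_filter, Finset.mem_powerset] at hC𝒮
      obtain ⟨hCA, hCclq⟩ := hC𝒮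
      have hmin : ∀ C' : Finset V, C' ⊆ A → G.IsNClique ω C' →
          (ext G A C).card ≤ (ext G A C').card := by
        intro C' h1 h2
        exact hCmin C' (by rw [Finset.mem_filter, Finset.mem_powerset]; exact ⟨h1, h2⟩)
      have hnoiso : ∀ C' : Finset V, C' ⊆ A → G.IsNClique ω C' → ¬ IsoIn G A C' :=
        fun C' h1 h2 h3 => hIso ⟨C', h1, h2, h3⟩
      have hEne : (ext G A C).card ≠ 0 := by
        intro h
        exact hnoiso C hCA hCclq ((isoIn_iff_ext_empty hCA).2 (Finset.card_eq_zero.1 h))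
      by_cases hE1 : (ext G A C).card = 1
      · exact case2_one hω hfree hCA hCclq hnoiso hE1 hInv IH'
      by_cases hE2 : (ext G A C).card = 2
      · exact case2_two hω hfree hCA hCclq hnoiso hmin hE2 hInv IH'
      · exact case2_big hω hfree hCA hCclq hmin (by omega) hInv IH' 
  · -- CASE 3 : no ω-clique in A; use a maximal clique
    obtain ⟨W, hWA, hWne, hWclq, hWmax⟩ := exists_maximal_clique hAne
    obtain ⟨t, ht⟩ := hWne
    have hRW : ({t} : Finset V) ⊆ W := Finset.singleton_subset_iff.2 ht
    refine step hfree hWA ⟨t, ht⟩ hRW hInv ?_ ?_ ?_ ?_ IH'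
    · have h1 : W.card ≤ ω := hfree W hWclq
      have h2 : W.card ≠ ω := by
        intro h
        exact hKω ⟨W, hWA, hWclq, h⟩
      rw [Finset.card_singleton]
      omega
    · intro u hu v hv hadj
      rw [Finset.mem_singleton] at hu hv
      subst hu; subst hv
      exact absurd rfl hadj.ne
    · intro s hs x hx hadj
      rw [Finset.mem_singleton] at hs
      subst s
      rw [Finset.mem_sdiff] at hx
      obtain ⟨w, hwW, hnadj⟩ := hWmax x hx.1 hx.2
      have hwt : w ≠ t := by
        rintro rfl
        exact hnadj hadj.symm
      refine ⟨w, Finset.mem_union_left _ ?_, Or.inl ⟨?_, fun h => hnadj h.symm⟩⟩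
      · rw [Finset.mem_sdiff, Finset.mem_singleton]
        exact ⟨hwW, hwt⟩
      · exact hWclq ht hwW (Ne.symm hwt) |>.symm
    · intro C hCA hCclq _
      exact absurd ⟨C, hCA.trans Finset.sdiff_subset, hCclq⟩ hKω



lemma exists_big_T (G : SimpleGraph V) (hc : G.Connected)
    (h1 : G.cliqueNum + 1 ≤ Fintype.card V) (h2 : 4 ≤ G.cliqueNum + 1) :
    ∃ T : Finset V, Fintype.card V ≤ (G.cliqueNum - 1) * T.card ∧
      ∀ u ∈ T, ∀ v ∈ T, G.Adj u v →
        ∃ w ∈ Finset.univ \ T, Xor' (G.Adj w u) (G.Adj w v) := by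
  classical
  set ω := G.cliqueNum with hωdef
  have hω : 3 ≤ ω := by omega
  have hfree : ∀ s : Finset V, G.IsClique (s : Set V) → s.card ≤ ω :=
    fun s hs => IsClique.card_le_cliqueNum (tc := hs)
  have hInv : Inv G ω Finset.univ ∅ := by
    intro C hCU hCclq hCiso
    exfalso
    have hCne : C.Nonempty := by
      rw [← Finset.card_pos, hCclq.card_eq]
      omega
    obtain ⟨c, hcC⟩ := hCne
    have hvne : ∃ v : V, v ∉ C := by
      by_contra hco
      push_neg at hco
      have : Finset.univ ⊆ C := fun v _ => hco v
      have := Finset.card_le_card this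
      rw [hCclq.card_eq, Finset.card_univ] at this
      omega
    obtain ⟨v, hvC⟩ := hvne
    obtain ⟨p⟩ := (hc.preconnected c v)
    obtain ⟨d, -, hd1, hd2⟩ := p.exists_boundary_dart (C : Set V)
      (by exact_mod_cast hcC) (by exact_mod_cast hvC)
    exact hCiso d.fst (by exact_mod_cast hd1) d.snd (Finset.mem_univ _)
      (by exact_mod_cast hd2) d.adj
  obtain ⟨T, hTU, hTcard, hTgood⟩ :=
    main hω hfree (Finset.univ.card) Finset.univ ∅ rfl hInv
  refine ⟨T, ?_, ?_⟩
  · rw [← Finset.card_univ]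
    exact hTcard
  · intro u hu v hv hadj
    obtain ⟨w, hw, hxor⟩ := hTgood u hu v hv hadj
    rw [Finset.union_empty] at hw
    exact ⟨w, hw, hxor⟩

end DimALWork

end Hidden

theorem dimAL_le_floor (G : SimpleGraph V) (hc : G.Connected)
    (h1 : G.cliqueNum + 1 ≤ Fintype.card V) (h2 : 4 ≤ G.cliqueNum + 1) :
    (dimAL G : ℤ) ≤
      ⌊(((G.cliqueNum : ℚ) - 2) / ((G.cliqueNum : ℚ) - 1)) * (Fintype.card V : ℚ)⌋ := by
  classical
  obtain ⟨T, hTcard, hTgood⟩ := DimALWork.exists_big_T G hc h1 h2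
  have hω3 : 3 ≤ G.cliqueNum := by omega
  have hres : IsLocalAdjResolving G (Finset.univ \ T) := by
    intro u v hadj hu hv
    have huT : u ∈ T := by
      by_contra h
      exact hu (Finset.mem_sdiff.2 ⟨Finset.mem_univ _, h⟩)
    have hvT : v ∈ T := by
      by_contra h
      exact hv (Finset.mem_sdiff.2 ⟨Finset.mem_univ _, h⟩)
    exact hTgood u huT v hvT hadj
  have hdim : dimAL G ≤ (Finset.univ \ T).card :=
    Nat.sInf_le ⟨Finset.univ \ T, rfl, hres⟩
  have hTn : T.card ≤ Fintype.card V := by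
    rw [← Finset.card_univ]
    exact Finset.card_le_card (Finset.subset_univ T)
  have hScard : (Finset.univ \ T).card = Fintype.card V - T.card := by
    rw [Finset.card_sdiff_of_subset (Finset.subset_univ T), Finset.card_univ]
  rw [hScard] at hdim
  rw [Int.le_floor]
  have hc1 : ((dimAL G : ℤ) : ℚ) ≤ (Fintype.card V : ℚ) - (T.card : ℚ) := by
    have h := (Nat.cast_le (α := ℚ)).2 hdim
    rwa [Nat.cast_sub hTn] at h
  refine le_trans hc1 ?_
  have hωQ : (0:ℚ) < (G.cliqueNum : ℚ) - 1 := by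
    have : (3:ℚ) ≤ (G.cliqueNum : ℚ) := by exact_mod_cast hω3
    linarith
  rw [div_mul_eq_mul_div, le_div_iff₀ hωQ]
  have keyQ : (Fintype.card V : ℚ) ≤ ((G.cliqueNum : ℚ) - 1) * (T.card : ℚ) := by
    have h := (Nat.cast_le (α := ℚ)).2 hTcard
    rwa [Nat.cast_mul, Nat.cast_sub (by omega : 1 ≤ G.cliqueNum), Nat.cast_one] at h
  nlinarith [keyQ]
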